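/- Define polynomials P_0(x) = 1 and P_n(x) = (x/n) Σ_{k=1}^{n} σ(k) P_{n-k}(x) for n ≥ 1. Then for every positive integer k and every n ≥ 0, P_n(k) equals the number of k-colored partitions of n. -/

import Mathlib

/-- Sum of divisors function. -/
def mysigma (n : ℕ) : ℕ := ∑ d ∈ n.divisors, d

/-- Partition function: number of partitions of `n`. -/
def partcount (n : ℕ) : ℕ := Fintype.card (Nat.Partition n)

/-- D'Arcais polynomials as real functions. -/
noncomputable def P : ℕ → ℝ → ℝ
  | 0 => fun _ => 1
  | n + 1 => fun x => x / (n + 1) * ∑ k ∈ Finset.range (n + 1), (mysigma (k + 1) : ℝ) * P (n - k) x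

/-- Number of k-colored partitions of n (each part in one of k colors),
counted via splitting into one ordinary partition per color. -/
def pcolored : ℕ → ℕ → ℕ
  | 0, n => if n = 0 then 1 else 0
  | k + 1, n => ∑ j ∈ Finset.range (n + 1), pcolored k j * partcount (n - j)

section Aux
open Finset PowerSeries


def remEquiv (N d e : ℕ) (hd : 0 < d) (h : d * e ≤ N) :
    {l : Nat.Partition N // e ≤ l.parts.count d} ≃ Nat.Partition (N - d * e) where
  toFun l := ⟨l.1.parts - Multiset.replicate e d,
    fun {i} hi => l.1.parts_pos (Multiset.mem_of_le (tsub_le_self) hi), by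
      have hle : Multiset.replicate e d ≤ l.1.parts :=
        Multiset.le_count_iff_replicate_le.mp l.2
      have h2 := congrArg Multiset.sum (tsub_add_cancel_of_le hle)
      rw [Multiset.sum_add, Multiset.sum_replicate, smul_eq_mul, l.1.parts_sum] at h2
      have hmul : e * d = d * e := Nat.mul_comm e d
      omega⟩
  invFun m := ⟨⟨m.parts + Multiset.replicate e d,
    fun {i} hi => by
      rcases Multiset.mem_add.mp hi with h1 | h1
      · exact m.parts_pos h1
      · rw [Multiset.eq_of_mem_replicate h1]; exact hd, by
      rw [Multiset.sum_add, Multiset.sum_replicate, smul_eq_mul, m.parts_sum]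
      have hmul : e * d = d * e := Nat.mul_comm e d
      omega⟩, by
    simp [Multiset.count_replicate]⟩
  left_inv l := by
    apply Subtype.ext; apply Nat.Partition.ext
    exact tsub_add_cancel_of_le (Multiset.le_count_iff_replicate_le.mp l.2)
  right_inv m := by
    apply Nat.Partition.ext
    simp

lemma card_filter_count (N d e : ℕ) (hd : 0 < d) (he : 0 < e) :
    (Finset.univ.filter fun l : Nat.Partition N => e ≤ l.parts.count d).card
      = if d * e ≤ N then partcount (N - d * e) else 0 := by
  split_ifs with h
  · rw [← Fintype.card_subtype, partcount]
    exact Fintype.card_congr (remEquiv N d e hd h)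
  · rw [Finset.card_eq_zero, Finset.filter_eq_empty_iff]
    intro l _
    intro hc
    have hle : Multiset.replicate e d ≤ l.parts :=
      Multiset.le_count_iff_replicate_le.mp hc
    have h2 : (Multiset.replicate e d).sum ≤ l.parts.sum := by
      obtain ⟨u, hu⟩ := Multiset.le_iff_exists_add.mp hle
      rw [hu, Multiset.sum_add]; omega
    rw [Multiset.sum_replicate, smul_eq_mul, l.parts_sum] at h2
    have hmul : e * d = d * e := Nat.mul_comm e d
    omega


lemma parts_sum_expand (N : ℕ) (l : Nat.Partition N) :
    N = ∑ d ∈ Icc 1 N, d * l.parts.count d := by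
  have h1 : l.parts.sum = ∑ a ∈ l.parts.toFinset, a * l.parts.count a := by
    conv_lhs => rw [← Multiset.toFinset_sum_count_nsmul_eq l.parts]
    rw [Multiset.sum_sum]
    simp [Multiset.nsmul_singleton, mul_comm]
  have hsub : l.parts.toFinset ⊆ Icc 1 N := by
    intro a ha
    rw [Multiset.mem_toFinset] at ha
    have h2 := l.parts_pos ha
    have h3 : a ≤ l.parts.sum := Multiset.le_sum_of_mem ha
    rw [l.parts_sum] at h3
    exact mem_Icc.mpr ⟨h2, h3⟩
  conv_lhs => rw [← l.parts_sum]
  rw [h1]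
  exact Finset.sum_subset hsub (fun x _ hx => by
    rw [Multiset.mem_toFinset] at hx
    simp [Multiset.count_eq_zero_of_notMem hx])

lemma count_le (N d : ℕ) (hd : 0 < d) (l : Nat.Partition N) : l.parts.count d ≤ N := by
  have hle : Multiset.replicate (l.parts.count d) d ≤ l.parts :=
    Multiset.le_count_iff_replicate_le.mp le_rfl
  obtain ⟨u, hu⟩ := Multiset.le_iff_exists_add.mp hle
  have h2 := congrArg Multiset.sum hu
  rw [Multiset.sum_add, Multiset.sum_replicate, smul_eq_mul, l.parts_sum] at h2
  calc l.parts.count d ≤ l.parts.count d * d := Nat.le_mul_of_pos_right _ hd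
  _ ≤ N := by omega

lemma count_sum (N d : ℕ) (hd : 0 < d) :
    ∑ l : Nat.Partition N, l.parts.count d
      = ∑ e ∈ Icc 1 N, if d * e ≤ N then partcount (N - d * e) else 0 := by
  have h1 : ∀ l : Nat.Partition N, l.parts.count d
      = ∑ e ∈ Icc 1 N, if e ≤ l.parts.count d then 1 else 0 := by
    intro l
    rw [← Finset.card_filter]
    have : (Icc 1 N).filter (fun e => e ≤ l.parts.count d) = Icc 1 (l.parts.count d) := by
      ext x
      simp only [mem_filter, mem_Icc]
      have := count_le N d hd l
      omega
    rw [this, Nat.card_Icc]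
    omega
  calc ∑ l : Nat.Partition N, l.parts.count d
      = ∑ l : Nat.Partition N, ∑ e ∈ Icc 1 N, if e ≤ l.parts.count d then 1 else 0 :=
        Finset.sum_congr rfl fun l _ => h1 l
    _ = ∑ e ∈ Icc 1 N, ∑ l : Nat.Partition N, (if e ≤ l.parts.count d then 1 else 0) :=
        Finset.sum_comm
    _ = _ := by
        refine Finset.sum_congr rfl fun e he => ?_
        rw [← Finset.card_filter, card_filter_count N d e hd (mem_Icc.mp he).1]

lemma core_product (N : ℕ) :
    N * partcount N
      = ∑ d ∈ Icc 1 N, ∑ e ∈ Icc 1 N, if d * e ≤ N then d * partcount (N - d * e) else 0 := by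
  have h1 : N * partcount N = ∑ l : Nat.Partition N, N := by
    rw [Finset.sum_const, partcount, Finset.card_univ, smul_eq_mul, mul_comm]
  rw [h1]
  calc ∑ l : Nat.Partition N, N
      = ∑ l : Nat.Partition N, ∑ d ∈ Icc 1 N, d * l.parts.count d := by
        exact Finset.sum_congr rfl fun l _ => parts_sum_expand N l
    _ = ∑ d ∈ Icc 1 N, ∑ l : Nat.Partition N, d * l.parts.count d := Finset.sum_comm
    _ = ∑ d ∈ Icc 1 N, d * ∑ l : Nat.Partition N, l.parts.count d := by
        simp [Finset.mul_sum]
    _ = _ := by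
        refine Finset.sum_congr rfl fun d hd => ?_
        rw [count_sum N d (mem_Icc.mp hd).1, Finset.mul_sum]
        exact Finset.sum_congr rfl fun e _ => by rw [mul_ite, mul_zero]


lemma sigma_side (N : ℕ) :
    ∑ m ∈ Icc 1 N, mysigma m * partcount (N - m)
      = ∑ d ∈ Icc 1 N, ∑ e ∈ Icc 1 N, if d * e ≤ N then d * partcount (N - d * e) else 0 := by
  have h1 : ∀ m, mysigma m * partcount (N - m)
      = ∑ x ∈ m.divisorsAntidiagonal, x.1 * partcount (N - m) := by
    intro m
    rw [mysigma, Finset.sum_mul, ← Nat.sum_divisorsAntidiagonal (fun a b => a * partcount (N - m))]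
  calc ∑ m ∈ Icc 1 N, mysigma m * partcount (N - m)
      = ∑ m ∈ Icc 1 N, ∑ x ∈ m.divisorsAntidiagonal, x.1 * partcount (N - m) :=
        Finset.sum_congr rfl fun m _ => h1 m
    _ = ∑ p ∈ ((Icc 1 N) ×ˢ (Icc 1 N)).filter (fun p => p.1 * p.2 ≤ N),
          p.1 * partcount (N - p.1 * p.2) := by
        rw [Finset.sum_sigma']
        refine Finset.sum_bij' (fun x _ => x.2) (fun p _ => ⟨p.1 * p.2, p⟩) ?_ ?_ ?_ ?_ ?_
        · rintro ⟨m, a, b⟩ hx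
          simp only [Finset.mem_sigma, mem_Icc, Nat.mem_divisorsAntidiagonal] at hx
          obtain ⟨⟨hm1, hm2⟩, hab, hm0⟩ := hx
          subst hab
          simp only [mem_filter, mem_product, mem_Icc]
          have h0 : a * b ≠ 0 := by omega
          have ha : 0 < a := Nat.pos_of_ne_zero (fun h => h0 (by simp [h]))
          have hb : 0 < b := Nat.pos_of_ne_zero (fun h => h0 (by simp [h]))
          refine ⟨⟨⟨ha, ?_⟩, hb, ?_⟩, by omega⟩
          · calc a ≤ a * b := Nat.le_mul_of_pos_right _ hb
              _ ≤ N := by omega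
          · calc b ≤ a * b := Nat.le_mul_of_pos_left _ ha
              _ ≤ N := by omega
        · rintro ⟨a, b⟩ hp
          simp only [mem_filter, mem_product, mem_Icc] at hp
          simp only [Finset.mem_sigma, mem_Icc, Nat.mem_divisorsAntidiagonal]
          have ha := hp.1.1.1
          have hb := hp.1.2.1
          have h0 : a * b ≠ 0 := Nat.mul_ne_zero (by omega) (by omega)
          exact ⟨⟨Nat.one_le_iff_ne_zero.mpr h0, hp.2⟩, trivial, h0⟩
        · rintro ⟨m, a, b⟩ hx
          simp only [Finset.mem_sigma, Nat.mem_divisorsAntidiagonal] at hx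
          simp [hx.2.1]
        · rintro ⟨a, b⟩ _; rfl
        · rintro ⟨m, a, b⟩ hx
          simp only [Finset.mem_sigma, Nat.mem_divisorsAntidiagonal] at hx
          simp [hx.2.1]
    _ = _ := by
        rw [Finset.sum_filter, Finset.sum_product]
lemma key (N : ℕ) : N * partcount N = ∑ m ∈ Finset.Icc 1 N, mysigma m * partcount (N - m) :=
  (core_product N).trans (sigma_side N).symm



lemma key' (n : ℕ) : (n + 1) * partcount (n + 1)
    = ∑ j ∈ range (n + 1), mysigma (j + 1) * partcount (n - j) := by
  rw [key (n + 1), ← Finset.Ico_add_one_right_eq_Icc, Finset.sum_Ico_eq_sum_range]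
  refine Finset.sum_congr (by congr 1) fun j _ => by rw [add_comm 1 j, Nat.succ_sub_succ]

noncomputable def Fps (f : ℕ → ℕ) : PowerSeries ℝ := PowerSeries.mk fun n => (f n : ℝ)

lemma F_zero : Fps (pcolored 0) = 1 := by
  ext n
  simp only [Fps, coeff_mk, pcolored, coeff_one]
  split_ifs <;> simp

lemma F_succ (k : ℕ) : Fps (pcolored (k + 1)) = Fps (pcolored k) * Fps partcount := by
  ext n
  rw [coeff_mul, Finset.Nat.sum_antidiagonal_eq_sum_range_succ_mk]
  simp only [Fps, coeff_mk, pcolored]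
  push_cast
  rfl

lemma dPc : d⁄dX ℝ (Fps partcount)
    = Fps (fun n => mysigma (n + 1)) * Fps partcount := by
  ext n
  rw [coeff_derivative, coeff_mul, Finset.Nat.sum_antidiagonal_eq_sum_range_succ_mk]
  simp only [Fps, coeff_mk]
  have h := key' n
  have h2 : ((n + 1) * partcount (n + 1) : ℝ)
      = ((∑ j ∈ range (n + 1), mysigma (j + 1) * partcount (n - j) : ℕ) : ℝ) := by
    rw [← h]; push_cast; ring
  push_cast at h2
  rw [show (partcount (n + 1) : ℝ) * ((n : ℝ) + 1) = ((n : ℝ) + 1) * partcount (n + 1) from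
    mul_comm _ _]
  push_cast
  linarith [h2]

lemma dF (k : ℕ) : d⁄dX ℝ (Fps (pcolored k))
    = PowerSeries.C (k : ℝ) * (Fps (fun n => mysigma (n + 1)) * Fps (pcolored k)) := by
  induction k with
  | zero => simp [F_zero]
  | succ k ih =>
    rw [F_succ, Derivation.leibniz, smul_eq_mul, smul_eq_mul, ih, dPc]
    push_cast
    rw [map_add, map_one]
    ring

lemma pc_rec (k n : ℕ) : ((n : ℝ) + 1) * pcolored k (n + 1)
    = k * ∑ j ∈ range (n + 1), (mysigma (j + 1) : ℝ) * pcolored k (n - j) := by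
  have h := congrArg (PowerSeries.coeff (R := ℝ) n) (dF k)
  rw [coeff_derivative, coeff_C_mul, coeff_mul,
    Finset.Nat.sum_antidiagonal_eq_sum_range_succ_mk] at h
  simp only [Fps, coeff_mk] at h
  rw [mul_comm] at h
  exact h


lemma partcount_zero : partcount 0 = 1 := by
  simp [partcount, Fintype.card_eq_one_iff]

lemma pcolored_zero (k : ℕ) : pcolored k 0 = 1 := by
  induction k with
  | zero => rfl
  | succ k ih => simp [pcolored, ih, partcount_zero]

end Aux

theorem darcais_at_nat (k : ℕ) (hk : 0 < k) (n : ℕ) :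
    P n (k : ℝ) = (pcolored k n : ℝ) := by
  induction n using Nat.strong_induction_on with
  | _ n ih =>
    match n with
    | 0 => simp [P, pcolored_zero]
    | n + 1 =>
      have hS : ∑ j ∈ Finset.range (n + 1), (mysigma (j + 1) : ℝ) * P (n - j) (k : ℝ)
          = ∑ j ∈ Finset.range (n + 1), (mysigma (j + 1) : ℝ) * pcolored k (n - j) :=
        Finset.sum_congr rfl fun j hj => by
          rw [ih (n - j) (by omega)]
      rw [P]
      simp only []
      rw [hS]
      have h := pc_rec k n
      have hne : ((n : ℝ) + 1) ≠ 0 := by positivity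
      field_simp
      linarith [h]
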